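/- Let ξ_n > 0 and η_n > 0 be sequences with sup_n ξ_n²/n < ∞, and fix σ ∈ (0,∞). Then p_n(θ, σ) → 0 as n → ∞ for every θ ∈ ℝ with θ ≠ 0 if and only if ξ_n η_n → 0 as n → ∞. -/

import Mathlib

open MeasureTheory ProbabilityTheory Filter Set

/-- Standard normal cdf. -/
noncomputable def Phi (x : ℝ) : ℝ :=
  ∫ t in Iic x, (Real.sqrt (2 * Real.pi))⁻¹ * Real.exp (-t ^ 2 / 2)

/-- Standard normal pdf. -/
noncomputable def stdPhi (t : ℝ) : ℝ :=
  (Real.sqrt (2 * Real.pi))⁻¹ * Real.exp (-t ^ 2 / 2)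

/-- Extension of `Phi` to the extended reals, with `PhiE ⊤ = 1` and `PhiE ⊥ = 0`. -/
noncomputable def PhiE (z : EReal) : ℝ :=
  if z = ⊤ then 1 else if z = ⊥ then 0 else Phi z.toReal

/-- Density of `m^{-1/2}` times the square root of a chi-square with `m` degrees of freedom. -/
noncomputable def rho (m : ℕ) (s : ℝ) : ℝ :=
  if 0 < s then
    (2 : ℝ) ^ ((1 : ℝ) - (m : ℝ) / 2) * (Real.Gamma ((m : ℝ) / 2))⁻¹ * Real.sqrt m *
      ((m : ℝ) * s ^ 2) ^ (((m : ℝ) - 1) / 2) * Real.exp (-(m : ℝ) * s ^ 2 / 2)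
  else 0

/-- Known-variance variable deletion probability. -/
noncomputable def pdel (n : ℕ) (ξ η θ σ : ℝ) : ℝ :=
  Phi (Real.sqrt n * (-θ / (σ * ξ) + η)) - Phi (Real.sqrt n * (-θ / (σ * ξ) - η))

lemma stdPhi_pos (t : ℝ) : 0 < stdPhi t := by
  unfold stdPhi
  have h : 0 < Real.sqrt (2 * Real.pi) := Real.sqrt_pos.2 (by positivity)
  positivity

lemma integrable_stdPhi : Integrable stdPhi := by
  have h : Integrable (fun t : ℝ => Real.exp (-(1/2 : ℝ) * t ^ 2)) :=
    integrable_exp_neg_mul_sq (by norm_num)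
  refine (h.const_mul (Real.sqrt (2 * Real.pi))⁻¹).congr ?_
  filter_upwards with t
  unfold stdPhi
  congr 1
  ring

lemma Phi_def (x : ℝ) : Phi x = ∫ t in Iic x, stdPhi t := rfl

lemma Phi_mono : Monotone Phi := fun a b hab => by
  rw [Phi_def, Phi_def]
  exact setIntegral_mono_set integrable_stdPhi.integrableOn
    (ae_of_all _ fun t => (stdPhi_pos t).le) ((Iic_subset_Iic.2 hab).eventuallyLE)

lemma Phi_sub (a b : ℝ) (hab : a ≤ b) :
    Phi b - Phi a = ∫ t in Ioc a b, stdPhi t := by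
  rw [Phi_def, Phi_def,
    intervalIntegral.integral_Iic_sub_Iic integrable_stdPhi.integrableOn integrable_stdPhi.integrableOn,
    intervalIntegral.integral_of_le hab]

lemma Phi_sub_le (a b d : ℝ) (hab : a ≤ b) (hd : ∀ t ∈ Ioc a b, stdPhi t ≤ stdPhi d) :
    Phi b - Phi a ≤ (b - a) * stdPhi d := by
  rw [Phi_sub a b hab]
  have h1 : ∫ t in Ioc a b, stdPhi t ≤ ∫ _t in Ioc a b, stdPhi d :=
    setIntegral_mono_on integrable_stdPhi.integrableOn
      (integrableOn_const (by rw [Real.volume_Ioc]; exact ENNReal.ofReal_ne_top))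
      measurableSet_Ioc hd
  calc ∫ t in Ioc a b, stdPhi t ≤ ∫ _t in Ioc a b, stdPhi d := h1
    _ = (b - a) * stdPhi d := by
        rw [setIntegral_const, measureReal_def, Real.volume_Ioc, ENNReal.toReal_ofReal (by linarith), smul_eq_mul]

lemma Phi_sub_pos (r : ℝ) (hr : 0 < r) : 0 < Phi r - Phi (-r) := by
  rw [Phi_sub _ _ (by linarith)]
  rw [setIntegral_pos_iff_support_of_nonneg_ae
    (ae_of_all _ fun t => (stdPhi_pos t).le) integrable_stdPhi.integrableOn]
  have hsupp : Function.support stdPhi ∩ Ioc (-r) r = Ioc (-r) r := by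
    ext t; simp [Function.mem_support, (stdPhi_pos t).ne']
  rw [hsupp, Real.volume_Ioc]
  exact ENNReal.ofReal_pos.2 (by linarith)

lemma stdPhi_le {d t : ℝ} (h : d ^ 2 ≤ t ^ 2) : stdPhi t ≤ stdPhi d := by
  unfold stdPhi
  have h0 : 0 < Real.sqrt (2 * Real.pi) := Real.sqrt_pos.2 (by positivity)
  exact mul_le_mul_of_nonneg_left (Real.exp_le_exp.2 (by linarith)) (by positivity)

lemma mul_stdPhi_le (x : ℝ) (hx : 0 ≤ x) : x * stdPhi (x / 2) ≤ 3 := by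
  have hc : (Real.sqrt (2 * Real.pi))⁻¹ ≤ 1 := by
    rw [inv_le_one_iff₀]
    right
    rw [show (1:ℝ) = Real.sqrt 1 by simp]
    exact Real.sqrt_le_sqrt (by nlinarith [Real.pi_gt_three])
  have hexp1 : Real.exp (-(x/2) ^ 2 / 2) ≤ 1 := Real.exp_le_one_iff.2 (by nlinarith)
  rcases le_or_gt x 3 with h | h
  · calc x * stdPhi (x / 2) ≤ 3 * 1 := by
          unfold stdPhi
          exact mul_le_mul h (by nlinarith [Real.exp_pos (-(x/2)^2/2)]) (by have h0 : 0 < Real.sqrt (2 * Real.pi) := Real.sqrt_pos.2 (by positivity); positivity) (by norm_num)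
      _ = 3 := by norm_num
  · have h1 : x ^ 2 / 8 ≤ Real.exp ((x/2) ^ 2 / 2) := by
      nlinarith [Real.add_one_le_exp ((x/2) ^ 2 / 2)]
    have he : Real.exp (-(x/2) ^ 2 / 2) ≤ 8 / x ^ 2 := by
      have : Real.exp (-(x/2) ^ 2 / 2) = (Real.exp ((x/2) ^ 2 / 2))⁻¹ := by
        rw [← Real.exp_neg]; ring_nf
      rw [this, show (8:ℝ)/x^2 = (x^2/8)⁻¹ by rw [inv_div]]
      exact inv_anti₀ (by nlinarith) h1
    calc x * stdPhi (x / 2) ≤ x * (1 * (8 / x ^ 2)) := by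
          unfold stdPhi
          refine mul_le_mul_of_nonneg_left ?_ (by linarith)
          exact mul_le_mul hc he (Real.exp_pos _).le (by norm_num)
      _ = 8 / x := by field_simp
      _ ≤ 3 := by rw [div_le_iff₀ (by linarith)]; nlinarith

set_option maxHeartbeats 1000000 in
/-- with `sup_n ξ_n²/n < ∞` and fixed `σ ∈ (0,∞)`, the deletion probability
`p_n(θ,σ)` tends to `0` for every fixed `θ ≠ 0` iff `ξ_n η_n → 0`. -/
theorem stmt_0 (ξ η : ℕ → ℝ) (hξ : ∀ n, 0 < ξ n) (hη : ∀ n, 0 < η n)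
    (hsup : ∃ C : ℝ, ∀ n : ℕ, ξ n ^ 2 / n ≤ C)
    (σ : ℝ) (hσ : 0 < σ) :
    (∀ θ : ℝ, θ ≠ 0 →
        Tendsto (fun n => pdel n (ξ n) (η n) θ σ) atTop (nhds 0)) ↔
      Tendsto (fun n => ξ n * η n) atTop (nhds 0) := by
  have hge : ∀ (n : ℕ) (θ : ℝ), 0 ≤ pdel n (ξ n) (η n) θ σ := fun n θ => by
    unfold pdel
    refine sub_nonneg.2 (Phi_mono ?_)
    have h1 := Real.sqrt_nonneg (n : ℝ)
    nlinarith [hη n]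
  constructor
  · -- forward direction
    intro H
    by_contra hcon
    rw [Metric.tendsto_atTop] at hcon
    push_neg at hcon
    obtain ⟨ε, hε, hfreq⟩ := hcon
    obtain ⟨C, hC⟩ := hsup
    have hC' : (0 : ℝ) < max C 1 := lt_of_lt_of_le one_pos (le_max_right _ _)
    have hsC' : 0 < Real.sqrt (max C 1) := Real.sqrt_pos.2 hC'
    set r : ℝ := ε / (2 * Real.sqrt (max C 1)) with hrdef
    have hr : 0 < r := div_pos hε (by linarith)
    have hδ := Phi_sub_pos r hr
    have hθpos : 0 < σ * ε / 2 := by nlinarith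
    have hten := H (σ * ε / 2) hθpos.ne'
    rw [Metric.tendsto_atTop] at hten
    obtain ⟨N, hN⟩ := hten (Phi r - Phi (-r)) hδ
    obtain ⟨n, hnN, hnε⟩ := hfreq (max N 1)
    have hn1 : 1 ≤ n := le_trans (le_max_right N 1) hnN
    have hdist := hN n (le_trans (le_max_left N 1) hnN)
    have hq : 0 < ξ n := hξ n
    have he : 0 < η n := hη n
    have hεle : ε ≤ ξ n * η n := by
      rw [Real.dist_eq, sub_zero, abs_of_pos (mul_pos hq he)] at hnε; exact hnε
    set s := Real.sqrt n with hsdef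
    have hs1 : (1 : ℝ) ≤ s := by
      rw [hsdef, show (1:ℝ) = Real.sqrt 1 by simp]
      exact Real.sqrt_le_sqrt (by exact_mod_cast hn1)
    have hs : 0 < s := lt_of_lt_of_le one_pos hs1
    have hqle : ξ n ≤ Real.sqrt (max C 1) * s := by
      have hn0 : (0:ℝ) < (n:ℝ) := by exact_mod_cast hn1
      have h1 : ξ n ^ 2 ≤ max C 1 * n := by
        have h2 := hC n
        rw [div_le_iff₀ hn0] at h2
        nlinarith [le_max_left C 1]
      have h2 : (Real.sqrt (max C 1) * s) ^ 2 = max C 1 * n := by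
        rw [mul_pow, Real.sq_sqrt hC'.le, hsdef, Real.sq_sqrt hn0.le]
      nlinarith [mul_pos hsC' hs]
    set c := s * ε / (2 * ξ n) with hcdef
    set h := s * η n with hhdef
    have hc2q : c * (2 * ξ n) = s * ε := by rw [hcdef]; field_simp
    have hr2 : r * (2 * Real.sqrt (max C 1)) = ε := by rw [hrdef]; field_simp
    have hcpos : 0 < c := div_pos (mul_pos hs hε) (by linarith)
    have hhc : 2 * c ≤ h := by
      have h1 : s * ε ≤ s * (ξ n * η n) := mul_le_mul_of_nonneg_left hεle hs.le
      nlinarith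
    have h2r : 2 * r ≤ h := by
      have h1 : s * ε ≤ s * (ξ n * η n) := mul_le_mul_of_nonneg_left hεle hs.le
      have h2 : ε * ξ n ≤ ε * (Real.sqrt (max C 1) * s) := mul_le_mul_of_nonneg_left hqle hε.le
      nlinarith [mul_pos hq hsC']
    have hA : s * (-(σ * ε / 2) / (σ * ξ n) - η n) = -c - h := by
      rw [hcdef, hhdef]; field_simp [hσ.ne', hq.ne']
    have hB : s * (-(σ * ε / 2) / (σ * ξ n) + η n) = -c + h := by
      rw [hcdef, hhdef]; field_simp [hσ.ne', hq.ne']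
    have hpd : pdel n (ξ n) (η n) (σ * ε / 2) σ = Phi (-c + h) - Phi (-c - h) := by
      unfold pdel
      rw [← hsdef, hA, hB]
    have hlow : Phi r - Phi (-r) ≤ pdel n (ξ n) (η n) (σ * ε / 2) σ := by
      rw [hpd]
      have h1 : Phi r ≤ Phi (-c + h) := Phi_mono (by linarith)
      have h2 : Phi (-c - h) ≤ Phi (-r) := Phi_mono (by linarith)
      linarith
    rw [Real.dist_eq, sub_zero] at hdist
    have := le_abs_self (pdel n (ξ n) (η n) (σ * ε / 2) σ)
    linarith
  · -- reverse direction
    intro hL θ hθ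
    have hθa : 0 < |θ| := abs_pos.2 hθ
    have hbound : ∀ᶠ n in atTop,
        pdel n (ξ n) (η n) θ σ ≤ 6 * σ / |θ| * (ξ n * η n) := by
      have hev1 : ∀ᶠ n : ℕ in atTop, ξ n * η n < |θ| / (2 * σ) :=
        hL.eventually_lt_const (div_pos hθa (by linarith))
      filter_upwards [hev1, eventually_ge_atTop 1] with n hn1 hn2
      have hq : 0 < ξ n := hξ n
      have he : 0 < η n := hη n
      set s := Real.sqrt n with hsdef
      have hs1 : (1 : ℝ) ≤ s := by
        rw [hsdef, show (1:ℝ) = Real.sqrt 1 by simp]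
        exact Real.sqrt_le_sqrt (by exact_mod_cast hn2)
      have hs : 0 < s := lt_of_lt_of_le one_pos hs1
      set x := s * |θ| / (σ * ξ n) with hxdef
      have hx : 0 < x := div_pos (mul_pos hs hθa) (mul_pos hσ hq)
      set h := s * η n with hhdef
      set c := s * θ / (σ * ξ n) with hcdef
      have hxq : x * (σ * ξ n) = s * |θ| := by
        rw [hxdef]; field_simp [hσ.ne', hq.ne']
      have hhx : h ≤ x / 2 := by
        have h2 : 2 * σ * (ξ n * η n) < |θ| := by
          rw [lt_div_iff₀ (by linarith : (0:ℝ) < 2 * σ)] at hn1; linarith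
        have h3 : s * (2 * σ * (ξ n * η n)) ≤ s * |θ| := by nlinarith
        nlinarith [mul_pos hσ hq]
      have hca : |c| = x := by
        rw [hcdef, hxdef, abs_div, abs_of_pos (mul_pos hσ hq), abs_mul,
          abs_of_pos hs]
      have hh0 : 0 < h := mul_pos hs he
      have hab : -c - h ≤ -c + h := by linarith
      have hmain : ∀ t ∈ Ioc (-c - h) (-c + h), stdPhi t ≤ stdPhi (x / 2) := by
        intro t ht
        apply stdPhi_le
        have habs : x / 2 ≤ |t| := by
          rcases le_or_gt 0 c with hc | hc
          · have hcx : c = x := by rw [← hca, abs_of_nonneg hc]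
            rw [abs_of_nonpos (by linarith [ht.2])]
            linarith [ht.2]
          · have hcx : c = -x := by
              have := abs_of_neg hc
              linarith [hca]
            rw [abs_of_nonneg (by linarith [ht.1])]
            linarith [ht.1]
        calc (x / 2) ^ 2 ≤ |t| ^ 2 := pow_le_pow_left₀ (by linarith) habs 2
          _ = t ^ 2 := sq_abs t
      have hle := Phi_sub_le (-c - h) (-c + h) (x / 2) hab hmain
      have hA : s * (-θ / (σ * ξ n) - η n) = -c - h := by
        rw [hcdef, hhdef]; field_simp [hσ.ne', hq.ne']
      have hB : s * (-θ / (σ * ξ n) + η n) = -c + h := by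
        rw [hcdef, hhdef]; field_simp [hσ.ne', hq.ne']
      have hhq : s * η n * |θ| = σ * ξ n * η n * x := by
        rw [hxdef]; field_simp [hσ.ne', hq.ne']
      have hnum : (0:ℝ) ≤ 2 * σ * ξ n * η n / |θ| :=
        le_of_lt (div_pos (by nlinarith) hθa)
      calc pdel n (ξ n) (η n) θ σ = Phi (-c + h) - Phi (-c - h) := by
            unfold pdel; rw [← hsdef, hA, hB]
        _ ≤ ((-c + h) - (-c - h)) * stdPhi (x / 2) := hle
        _ = 2 * h * stdPhi (x / 2) := by ring
        _ = 2 * σ * ξ n * η n / |θ| * (x * stdPhi (x / 2)) := by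
            rw [hhdef, div_mul_eq_mul_div, eq_div_iff hθa.ne']
            linear_combination 2 * stdPhi (x / 2) * hhq
        _ ≤ 2 * σ * ξ n * η n / |θ| * 3 :=
            mul_le_mul_of_nonneg_left (mul_stdPhi_le x hx.le) hnum
        _ = 6 * σ / |θ| * (ξ n * η n) := by field_simp [hθa.ne']; ring
    refine squeeze_zero' (Eventually.of_forall fun n => hge n θ) hbound ?_
    have := hL.const_mul (6 * σ / |θ|)
    simpa using this
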